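/- Let Δ = (Δ₁,…,Δ_m) be C¹ functions on B_σ(0) ⊂ ℝⁿ each satisfying an equation of the form ∂Δ_k/∂x_{ℓ(k)}(x) = Σ_j A_{kj}(x) Δ_j(x) with continuous bounded coefficients A_{kj}, and suppose Δ_k vanishes identically on the hyperplane {x_{ℓ(k)} = 0}. Then Δ ≡ 0 on a neighborhood of 0. -/

import Mathlib

open Set Function

/-- Linear homogeneous uniqueness statement (the key final step in the proof of
Darboux's theorem on overdetermined systems): C¹ functions `Δ₁, …, Δ_m` on the
ℓ¹ ball `B_σ(0) ⊆ ℝⁿ`, each satisfying a determined linear homogeneous equation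
`∂Δ_k/∂x_{ℓ(k)} = Σ_j A_{kj} Δ_j` with continuous bounded coefficients and
vanishing identically on the hyperplane `{x_{ℓ(k)} = 0}`, vanish identically on a
neighborhood of `0`. -/
theorem darboux_linear_homogeneous_vanishing (n m : ℕ) (σ : ℝ) (hσ : 0 < σ)
    (Δ : Fin m → (Fin n → ℝ) → ℝ) (ℓ : Fin m → Fin n)
    (A : Fin m → Fin m → (Fin n → ℝ) → ℝ)
    (hAc : ∀ k j, ContinuousOn (A k j) {x : Fin n → ℝ | ∑ i, |x i| ≤ σ})
    (hAb : ∀ k j, ∃ C : ℝ, ∀ x : Fin n → ℝ, (∑ i, |x i| ≤ σ) → |A k j x| ≤ C)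
    (hΔ : ContDiffOn ℝ 1 (fun x k => Δ k x) {x : Fin n → ℝ | ∑ i, |x i| ≤ σ})
    (heq : ∀ x : Fin n → ℝ, (∑ i, |x i| ≤ σ) → ∀ k,
      HasDerivWithinAt (fun t => Δ k (Function.update x (ℓ k) t))
        (∑ j, A k j x * Δ j x)
        {t : ℝ | ∑ i, |Function.update x (ℓ k) t i| ≤ σ} (x (ℓ k)))
    (hdata : ∀ x : Fin n → ℝ, (∑ i, |x i| ≤ σ) → ∀ k, x (ℓ k) = 0 → Δ k x = 0) :
    ∃ ε > 0, ∀ x : Fin n → ℝ, (∑ i, |x i| ≤ ε) → ∀ k, Δ k x = 0 := by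
  rcases Nat.eq_zero_or_pos m with hm | hm
  · subst hm; exact ⟨σ, hσ, fun x _ k => k.elim0⟩
  have : Nonempty (Fin m) := ⟨⟨0, hm⟩⟩
  -- a uniform bound for the coefficients
  choose C0 hC0 using hAb
  set C : ℝ := ∑ k : Fin m, ∑ j : Fin m, max (C0 k j) 0 with hCdef
  have hCnn : 0 ≤ C :=
    Finset.sum_nonneg fun k _ => Finset.sum_nonneg fun j _ => le_max_right _ _
  have hC : ∀ k j (x : Fin n → ℝ), (∑ i, |x i| ≤ σ) → |A k j x| ≤ C := by
    intro k j x hx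
    calc |A k j x| ≤ max (C0 k j) 0 := le_trans (hC0 k j x hx) (le_max_left _ _)
      _ ≤ ∑ j' : Fin m, max (C0 k j') 0 :=
          Finset.single_le_sum (f := fun j' => max (C0 k j') 0)
            (fun j' _ => le_max_right _ _) (Finset.mem_univ j)
      _ ≤ C :=
          Finset.single_le_sum (f := fun k' => ∑ j' : Fin m, max (C0 k' j') 0)
            (fun k' _ => Finset.sum_nonneg fun j' _ => le_max_right _ _)
            (Finset.mem_univ k)
  -- choice of ε
  set ε : ℝ := min σ (1 / (2 * (m * C + 1))) with hεdef
  have hεpos : 0 < ε := lt_min hσ (by positivity)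
  have hεσ : ε ≤ σ := min_le_left _ _
  have hεsmall : (m : ℝ) * C * ε ≤ 1 / 2 := by
    have h1 : ε ≤ 1 / (2 * (↑m * C + 1)) := min_le_right _ _
    have h2 : (0 : ℝ) < ↑m * C + 1 := by positivity
    have hmC : (0 : ℝ) ≤ ↑m * C := by positivity
    calc (m : ℝ) * C * ε ≤ (↑m * C) * (1 / (2 * (↑m * C + 1))) :=
          mul_le_mul_of_nonneg_left h1 hmC
      _ = (↑m * C) / (2 * (↑m * C + 1)) := by ring
      _ ≤ 1 / 2 := by
          rw [div_le_div_iff₀ (by positivity) (by norm_num)]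
          nlinarith
  refine ⟨ε, hεpos, ?_⟩
  set K : Set (Fin n → ℝ) := {x | ∑ i, |x i| ≤ ε} with hK
  have hKσ : K ⊆ {x | ∑ i, |x i| ≤ σ} := fun x hx => le_trans hx hεσ
  have hKc : IsCompact K := by
    refine (isCompact_closedBall (0 : Fin n → ℝ) ε).of_isClosed_subset ?_ ?_
    · exact isClosed_le (by fun_prop) continuous_const
    · intro x hx
      rw [Metric.mem_closedBall, dist_zero_right]
      refine (pi_norm_le_iff_of_nonneg (le_of_lt hεpos)).2 fun i => ?_
      calc ‖x i‖ = |x i| := rfl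
        _ ≤ ∑ i', |x i'| :=
            Finset.single_le_sum (f := fun i' => |x i'|) (fun _ _ => abs_nonneg _)
              (Finset.mem_univ i)
        _ ≤ ε := hx
  have hK0 : (0 : Fin n → ℝ) ∈ K := by simp [hK, hεpos.le]
  have hcont : ContinuousOn (fun x => ‖fun k => Δ k x‖) K :=
    ((hΔ.continuousOn).mono hKσ).norm
  obtain ⟨x₀, hx₀K, hmax⟩ := hKc.exists_isMaxOn ⟨0, hK0⟩ hcont
  set S : ℝ := ‖fun k => Δ k x₀‖ with hS
  have hSnn : 0 ≤ S := norm_nonneg _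
  have hΔleS : ∀ y ∈ K, ∀ j, |Δ j y| ≤ S := fun y hy j =>
    le_trans (norm_le_pi_norm (fun k => Δ k y) j) (hmax hy)
  -- the key estimate at the maximum point
  have key : ∀ k, |Δ k x₀| ≤ (↑m * C * S) * ε := by
    intro k
    set l := ℓ k with hl
    set b := x₀ l with hb
    have hbε : |b| ≤ ε :=
      le_trans (Finset.single_le_sum (f := fun i => |x₀ i|) (fun _ _ => abs_nonneg _)
        (Finset.mem_univ l)) hx₀K
    have hsum : ∀ t : ℝ, |t| ≤ |b| → ∑ i, |Function.update x₀ l t i| ≤ ∑ i, |x₀ i| := by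
      intro t ht
      rw [Fintype.sum_eq_add_sum_compl l (fun i => |Function.update x₀ l t i|),
        Fintype.sum_eq_add_sum_compl l (fun i => |x₀ i|)]
      have hcompl : ∑ i ∈ ({l}ᶜ : Finset (Fin n)), |Function.update x₀ l t i|
          = ∑ i ∈ ({l}ᶜ : Finset (Fin n)), |x₀ i| := by
        refine Finset.sum_congr rfl fun i hi => ?_
        rw [Function.update_of_ne (Finset.notMem_singleton.mp (Finset.mem_compl.mp hi))]
      rw [hcompl, Function.update_self]
      exact add_le_add_left ht _
    have habs : ∀ t ∈ uIcc (0 : ℝ) b, |t| ≤ |b| := by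
      intro t ht
      have h1 := le_abs_self b
      have h2 := neg_abs_le b
      rcases Set.mem_uIcc.mp ht with ⟨ha, hb'⟩ | ⟨ha, hb'⟩ <;>
        rw [abs_le] <;> constructor <;> linarith
    have hmem : ∀ t ∈ uIcc (0 : ℝ) b, Function.update x₀ l t ∈ K := fun t ht =>
      le_trans (hsum t (habs t ht)) hx₀K
    set D : ℝ → ℝ := fun t =>
      ∑ j, A k j (Function.update x₀ l t) * Δ j (Function.update x₀ l t) with hD
    have hderiv : ∀ t ∈ uIcc (0 : ℝ) b,
        HasDerivWithinAt (fun t => Δ k (Function.update x₀ l t)) (D t) (uIcc (0 : ℝ) b) t := by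
      intro t ht
      have hyσ : ∑ i, |Function.update x₀ l t i| ≤ σ := le_trans (hmem t ht) hεσ
      have h := heq (Function.update x₀ l t) hyσ k
      rw [← hl] at h
      simp only [Function.update_idem, Function.update_self] at h
      exact h.mono fun s hs => le_trans (hmem s hs) hεσ
    have hDb : ∀ t ∈ uIcc (0 : ℝ) b, ‖D t‖ ≤ ↑m * C * S := by
      intro t ht
      have hyK := hmem t ht
      have hyσ : ∑ i, |Function.update x₀ l t i| ≤ σ := le_trans hyK hεσ
      calc ‖D t‖ ≤ ∑ j, |A k j (Function.update x₀ l t) * Δ j (Function.update x₀ l t)| :=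
            Finset.abs_sum_le_sum_abs _ _
        _ ≤ ∑ _j : Fin m, C * S := by
            refine Finset.sum_le_sum fun j _ => ?_
            rw [abs_mul]
            exact mul_le_mul (hC k j _ hyσ) (hΔleS _ hyK j) (abs_nonneg _) hCnn
        _ = ↑m * C * S := by
            simp [Finset.sum_const, Finset.card_univ, nsmul_eq_mul, mul_assoc]
    have hmvt := (convex_uIcc (0 : ℝ) b).norm_image_sub_le_of_norm_hasDerivWithin_le
      hderiv hDb (left_mem_uIcc) (right_mem_uIcc)
    have hz : Δ k (Function.update x₀ l 0) = 0 := by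
      refine hdata _ (le_trans (hmem 0 left_mem_uIcc) hεσ) k ?_
      rw [← hl, Function.update_self]
    have hbb : Function.update x₀ l b = x₀ := Function.update_eq_self l x₀
    rw [hbb, hz, sub_zero, sub_zero, Real.norm_eq_abs, Real.norm_eq_abs] at hmvt
    calc |Δ k x₀| ≤ ↑m * C * S * |b| := hmvt
      _ ≤ ↑m * C * S * ε := by
          refine mul_le_mul_of_nonneg_left hbε ?_
          positivity
  have hSle : S ≤ (↑m * C * ε) * S := by
    have h1 : S ≤ (↑m * C * S) * ε :=
      (pi_norm_le_iff_of_nonneg (by positivity)).2 fun k => key k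
    nlinarith
  have hS0 : S = 0 := by nlinarith
  intro x hx k
  have h := hΔleS x hx k
  rw [hS0] at h
  exact abs_nonpos_iff.mp h
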